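/- For every integer P ≥ 2, set c_H^P = (2P+8−√((P+1)(P+9)))/(2(P+1)^{1/3}) and c_R^P = (P+3)/(2(P+1)^{1/3}). If (q,p) ∈ (ℝ²∖{(0,0)})×ℝ² satisfies |q₁| ≤ 3^{-1/3} and H_H(q,p) = −c_H^P, then H_R(q,p) ≤ −c_R^P. (This is the core inequality proving the inclusion M_H^{c_H^P} ⊂ M_R^{c_R^P} of Theorem 5.5 / Theorem B(2).) -/

import Mathlib

/-- The rotating Kepler Hamiltonian `H_R(q,p) = ½|p|² − 1/|q| + q₁p₂ − q₂p₁`. -/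
noncomputable def HR (x : (ℝ × ℝ) × (ℝ × ℝ)) : ℝ :=
  (1/2) * (x.2.1^2 + x.2.2^2) - 1 / Real.sqrt (x.1.1^2 + x.1.2^2)
    + x.1.1 * x.2.2 - x.1.2 * x.2.1

/-- Hill's lunar Hamiltonian `H_H = H_R − q₁² + ½q₂²`. -/
noncomputable def HH (x : (ℝ × ℝ) × (ℝ × ℝ)) : ℝ :=
  HR x - x.1.1^2 + (1/2) * x.1.2^2

set_option maxHeartbeats 1200000 in
/-- Core inequality of Theorem 5.5 / Theorem B(2): for `P ≥ 2`, with
`c_H^P = (2P+8−√((P+1)(P+9)))/(2(P+1)^{1/3})` and `c_R^P = (P+3)/(2(P+1)^{1/3})`,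
if `q ≠ 0`, `|q₁| ≤ 3^{-1/3}` and `H_H(q,p) = −c_H^P`, then `H_R(q,p) ≤ −c_R^P`. -/
theorem hill_in_rotating_kepler_cHP (P : ℕ) (hP : 2 ≤ P)
    (q p : ℝ × ℝ) (hq : q ≠ 0) (hq1 : |q.1| ≤ (3:ℝ) ^ (-(1:ℝ)/3))
    (hH : HH (q, p) =
      -((2*(P:ℝ)+8 - Real.sqrt (((P:ℝ)+1) * ((P:ℝ)+9))) /
        (2 * ((P:ℝ)+1) ^ ((1:ℝ)/3)))) :
    HR (q, p) ≤ -(((P:ℝ)+3) / (2 * ((P:ℝ)+1) ^ ((1:ℝ)/3))) := by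
  obtain ⟨q1, q2⟩ := q
  obtain ⟨p1, p2⟩ := p
  replace hq1 : |q1| ≤ (3:ℝ) ^ (-(1:ℝ)/3) := hq1
  have hP2 : (2:ℝ) ≤ (P:ℝ) := by exact_mod_cast hP
  have hqpos : 0 < q1^2 + q2^2 := by
    rcases lt_or_eq_of_le (by positivity : (0:ℝ) ≤ q1^2+q2^2) with h | h
    · exact h
    · exfalso; apply hq
      have h1 : q1 = 0 := by
        have h1' : q1^2 = 0 := le_antisymm (by linarith [sq_nonneg q2]) (sq_nonneg q1)
        exact pow_eq_zero_iff (by norm_num) |>.mp h1'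
      have h2 : q2 = 0 := by
        have h2' : q2^2 = 0 := le_antisymm (by linarith [sq_nonneg q1]) (sq_nonneg q2)
        exact pow_eq_zero_iff (by norm_num) |>.mp h2'
      simp [Prod.ext_iff, h1, h2]
  have hHHval : HH ((q1,q2),(p1,p2)) = (1/2)*(p1^2+p2^2) - 1/Real.sqrt (q1^2+q2^2)
      + q1*p2 - q2*p1 - q1^2 + (1/2)*q2^2 := rfl
  have hHRval : HR ((q1,q2),(p1,p2)) = (1/2)*(p1^2+p2^2) - 1/Real.sqrt (q1^2+q2^2)
      + q1*p2 - q2*p1 := rfl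
  set r := Real.sqrt (q1^2+q2^2) with hrdef
  have hrpos : 0 < r := Real.sqrt_pos.mpr hqpos
  have hr2 : r^2 = q1^2+q2^2 := Real.sq_sqrt hqpos.le
  set w := ((P:ℝ)+1) ^ ((1:ℝ)/6) with hwdef
  have hwpos : 0 < w := Real.rpow_pos_of_pos (by linarith) _
  have hw6 : w^6 = (P:ℝ)+1 := by
    rw [hwdef, ← Real.rpow_natCast (((P:ℝ)+1) ^ ((1:ℝ)/6)) 6,
      ← Real.rpow_mul (by linarith : (0:ℝ) ≤ (P:ℝ)+1)]
    norm_num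
  set β := Real.sqrt ((P:ℝ)+9) with hβdef
  have hβpos : 0 < β := Real.sqrt_pos.mpr (by linarith)
  have hβ2 : β^2 = (P:ℝ)+9 := Real.sq_sqrt (by linarith)
  set N := (3:ℝ) ^ (-(1:ℝ)/3) with hNdef
  have hNpos : 0 < N := Real.rpow_pos_of_pos (by norm_num) _
  have hN3 : N^3 = 1/3 := by
    rw [hNdef, ← Real.rpow_natCast ((3:ℝ) ^ (-(1:ℝ)/3)) 3,
      ← Real.rpow_mul (by norm_num : (0:ℝ) ≤ 3)]
    norm_num
  have ha : ((P:ℝ)+1) ^ ((1:ℝ)/3) = w^2 := by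
    rw [hwdef, ← Real.rpow_natCast (((P:ℝ)+1) ^ ((1:ℝ)/6)) 2,
      ← Real.rpow_mul (by linarith : (0:ℝ) ≤ (P:ℝ)+1)]
    norm_num
  have hs : Real.sqrt (((P:ℝ)+1) * ((P:ℝ)+9)) = w^3 * β := by
    rw [Real.sqrt_mul (by linarith), ← hβdef]
    congr 1
    rw [hwdef, ← Real.rpow_natCast (((P:ℝ)+1) ^ ((1:ℝ)/6)) 3,
      ← Real.rpow_mul (by linarith : (0:ℝ) ≤ (P:ℝ)+1),
      show ((1:ℝ)/6 * (3:ℕ) : ℝ) = 1/2 by norm_num]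
    exact Real.sqrt_eq_rpow _
  rw [hHHval, hs, ha] at hH
  rw [hHRval, ha]
  -- basic bounds
  have hw3pos : 0 < w^3 := pow_pos hwpos 3
  have h8 : β^2 - w^6 = 8 := by rw [hβ2, hw6]; ring
  have hβw : w^3 < β := by
    rcases lt_or_ge (w^3) β with h | h
    · exact h
    · exfalso
      have h2 : β^2 ≤ w^6 := by
        calc β^2 ≤ (w^3)^2 := pow_le_pow_left₀ hβpos.le h 2
        _ = w^6 := by ring
      linarith
  have hden : 0 < w*(β+w^3) := mul_pos hwpos (by linarith)
  set e := 4/(w*(β+w^3)) with hedef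
  have hepos : 0 < e := div_pos (by norm_num) hden
  have he_inv : 1/e = (w*(β+w^3))/4 := by rw [hedef, one_div_div]
  have hw' : (6/5:ℝ) < w := by
    apply lt_of_pow_lt_pow_left₀ 6 hwpos.le
    rw [hw6]; norm_num; linarith
  have hβ' : (331/100:ℝ) < β := by
    apply lt_of_pow_lt_pow_left₀ 2 hβpos.le
    rw [hβ2]; norm_num; linarith
  have hN' : (693/1000:ℝ) < N := by
    apply lt_of_pow_lt_pow_left₀ 3 hNpos.le
    rw [hN3]; norm_num
  have hw3 : (216/125:ℝ) < w^3 := by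
    have h := pow_lt_pow_left₀ hw' (by norm_num : (0:ℝ) ≤ 6/5) (by norm_num : 3 ≠ 0)
    calc (216/125:ℝ) = (6/5)^3 := by norm_num
    _ < w^3 := h
  have hs1 : (7557/1250:ℝ) < w*(β+w^3) := by
    have h := mul_lt_mul'' hw' (show (331/100:ℝ) + 216/125 < β + w^3 by linarith)
      (by norm_num) (by norm_num)
    calc (7557/1250:ℝ) = (6/5) * (331/100 + 216/125) := by norm_num
    _ < w*(β+w^3) := h
  have hwe : 4 < N * (w*(β+w^3)) := by
    have h := mul_lt_mul'' hN' hs1 (by norm_num) (by norm_num)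
    calc (4:ℝ) < (693/1000) * (7557/1250) := by norm_num
    _ < N * (w*(β+w^3)) := h
  have hem : e < N := by rw [hedef, div_lt_iff₀ hden]; linarith
  have hPval : (P:ℝ) = w^6 - 1 := by linarith
  have hβ2w : β^2 = w^6 + 8 := by rw [hβ2]; linarith
  have hcc : (2*(P:ℝ)+8 - w^3*β)/(2*w^2) = e^2 + ((P:ℝ)+3)/(2*w^2) := by
    rw [hedef, hPval]
    field_simp
    linear_combination (-w^3*β - w^6 + 4) * hβ2w
  have hkey : (2*(P:ℝ)+8 - w^3*β)/(2*w^2) = 3/2*e^2 + 1/e := by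
    rw [he_inv, hedef, hPval]
    field_simp
    linear_combination (-6*w^3*β - 6*w^6 + 24) * hβ2w
  have hK : (2*(P:ℝ)+8 - w^3*β)/(2*w^2) ≤ 3/2*q1^2 + 1/r := by
    linarith [hH, sq_nonneg (p1-q2), sq_nonneg (p2+q1)]
  have hmain : q1^2 - (1/2)*q2^2 ≤ e^2 := by
    rcases le_or_gt (q1^2) (e^2) with hc | hc
    · linarith [sq_nonneg q2]
    · exfalso
      set v := |q1| with hvdef
      have hv2 : v^2 = q1^2 := sq_abs q1
      have hve : e < v := by
        apply lt_of_pow_lt_pow_left₀ 2 (abs_nonneg q1)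
        rw [hv2]; exact hc
      have hvpos : 0 < v := hepos.trans hve
      have hvr : v ≤ r := by
        apply le_of_pow_le_pow_left₀ (by norm_num : (2:ℕ) ≠ 0) hrpos.le
        rw [hv2, hr2]; linarith [sq_nonneg q2]
      have hrv : 1/r ≤ 1/v := one_div_le_one_div_of_le hvpos hvr
      have hA : 3/2*e^2 + 1/e ≤ 3/2*v^2 + 1/v := by
        rw [← hkey]; linarith [hK, hrv, hv2]
      have hvN : v ≤ N := hq1
      have h1 : e*v < N^2 := by
        calc e*v ≤ e*N := mul_le_mul_of_nonneg_left hvN hepos.le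
        _ < N*N := mul_lt_mul_of_pos_right hem hNpos
        _ = N^2 := by ring
      have h2 : v + e < 2*N := by linarith
      have h3 : e*v*(v+e) < 2/3 := by
        have h := mul_lt_mul'' h1 h2 (mul_pos hepos hvpos).le (by linarith)
        calc e*v*(v+e) < N^2*(2*N) := h
        _ = 2/3 := by linear_combination 2*hN3
      have expand1 : (3/2*e^2 + 1/e) * (e*v) = 3/2*e^3*v + v := by
        field_simp
      have expand2 : (3/2*v^2 + 1/v) * (e*v) = 3/2*v^3*e + e := by
        field_simp
      have hA' : 3/2*e^3*v + v ≤ 3/2*v^3*e + e := by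
        rw [← expand1, ← expand2]
        exact mul_le_mul_of_nonneg_right hA (mul_pos hepos hvpos).le
      have hpos := mul_pos (sub_pos.mpr hve)
        (by linarith : (0:ℝ) < 1 - 3/2*(e*v*(v+e)))
      linarith [hA', hpos]
  linarith [hH, hcc, hmain]
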